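/- Let G be a finite simple graph on n vertices containing at least ⌊n/2⌋ universal vertices (vertices adjacent to every other vertex of G). Then G is a perfect cancellation graph. -/

import Mathlib

/-- Apply a CNOT gate `g = (control, target)` to a state `t : V → Finset V`:
the target wire receives the symmetric difference of the control and target terms,
all other wires are unchanged. -/
def applyGate {V : Type*} [DecidableEq V] (g : V × V) (t : V → Finset V) : V → Finset V :=
  fun w => if w = g.2 then symmDiff (t g.1) (t g.2) else t w

/-- Run a circuit (a list of CNOT gates) from the initial state `term v = {v}`. -/
def runCircuit {V : Type*} [DecidableEq V] (C : List (V × V)) : V → Finset V :=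
  C.foldl (fun t g => applyGate g t) (fun v => {v})

/-- `C` is a graphic parity network for the graph `G`:
every gate has distinct control and target, every edge `{u, v}` of `G` appears as the
term of some wire after some prefix of the circuit, and the final state is the initial
state. Its size is `C.length`. -/
def IsGPN {V : Type*} [DecidableEq V] (G : SimpleGraph V) (C : List (V × V)) : Prop :=
  (∀ g ∈ C, g.1 ≠ g.2) ∧
  (∀ u v : V, G.Adj u v → ∃ (k : ℕ) (w : V), runCircuit (C.take k) w = {u, v}) ∧
  (∀ v : V, runCircuit C v = {v})

/-- A set `U` is `σ`-linked if any two vertices of `U` that are consecutive in the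
restriction of the ordering `σ` to `U` are adjacent in `G`. -/
def SigmaLinked {V : Type*} (G : SimpleGraph V) {n : ℕ} (σ : V ≃ Fin n) (U : Set V) :
    Prop :=
  ∀ ⦃a b : V⦄, a ∈ U → b ∈ U → σ a < σ b →
    (∀ w ∈ U, ¬(σ a < σ w ∧ σ w < σ b)) → G.Adj a b

/-- The set of neighbors of `v` occurring after `v` in the ordering `σ`. -/
def NPlus {V : Type*} (G : SimpleGraph V) {n : ℕ} (σ : V ≃ Fin n) (v : V) : Set V :=
  {u | G.Adj v u ∧ σ v < σ u}

/-- `σ` is a perfect cancellation ordering of `G`: for every vertex `v` and every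
connected component `K` of `G − v`, the set `N⁺_σ(v) ∩ K` is `σ`-linked. -/
def IsPCO {V : Type*} [Fintype V] (G : SimpleGraph V)
    (σ : V ≃ Fin (Fintype.card V)) : Prop :=
  ∀ (v : V) (K : (G.induce {u : V | u ≠ v}).ConnectedComponent),
    SigmaLinked G σ (NPlus G σ v ∩ (Subtype.val '' K.supp))

/-- A perfect cancellation graph is a graph admitting a perfect cancellation ordering. -/
def PerfectCancellationGraph {V : Type*} [Fintype V] (G : SimpleGraph V) : Prop :=
  ∃ σ : V ≃ Fin (Fintype.card V), IsPCO G σ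

theorem pcg_aux_exists_sigma {V : Type*} [Fintype V] (P : V → Prop)
    (h : Fintype.card V / 2 ≤ Nat.card {v : V | P v}) :
    ∃ σ : V ≃ Fin (Fintype.card V), ∀ v, ¬ P v → Even ((σ v : ℕ)) := by
  classical
  have hm : Nat.card {v : V | P v} = Fintype.card {v // P v} := by
    rw [Nat.card_eq_fintype_card]; rfl
  rw [hm] at h
  have hkm : Fintype.card {v // ¬ P v} + Fintype.card {v // P v} = Fintype.card V := by
    have := Fintype.card_congr (Equiv.sumCompl P)
    rw [Fintype.card_sum] at this
    omega
  set n := Fintype.card V with hn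
  set k := Fintype.card {v // ¬ P v} with hk
  set m := Fintype.card {v // P v} with hmm
  have hk1 : k ≤ m + 1 := by omega
  let f : Fin k ⊕ Fin m → Fin n := fun x =>
    match x with
    | .inl i => ⟨2 * i, by have := i.isLt; omega⟩
    | .inr j => if h2 : 2 * (j : ℕ) + 1 < 2 * k then ⟨2 * j + 1, by have := j.isLt; omega⟩
        else ⟨(j : ℕ) + k, by have := j.isLt; omega⟩
  have hinj : Function.Injective f := by
    rintro (i1 | j1) (i2 | j2) hf <;> simp only [f] at hf
    · have : (2 * (i1 : ℕ)) = 2 * (i2 : ℕ) := congrArg Fin.val hf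
      simp only [Sum.inl.injEq]
      exact Fin.ext (by omega)
    · exfalso
      split_ifs at hf with h2
      · have : (2 * (i1 : ℕ)) = 2 * (j2 : ℕ) + 1 := congrArg Fin.val hf
        omega
      · have : (2 * (i1 : ℕ)) = (j2 : ℕ) + k := congrArg Fin.val hf
        have := i1.isLt; omega
    · exfalso
      split_ifs at hf with h2
      · have : (2 * (j1 : ℕ) + 1) = 2 * (i2 : ℕ) := congrArg Fin.val hf
        omega
      · have : ((j1 : ℕ) + k) = 2 * (i2 : ℕ) := congrArg Fin.val hf
        have := i2.isLt; omega
    · simp only [Sum.inr.injEq]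
      split_ifs at hf with h2 h3 h3
      · have : (2 * (j1 : ℕ) + 1) = 2 * (j2 : ℕ) + 1 := congrArg Fin.val hf
        exact Fin.ext (by omega)
      · have : (2 * (j1 : ℕ) + 1) = (j2 : ℕ) + k := congrArg Fin.val hf
        omega
      · have : ((j1 : ℕ) + k) = 2 * (j2 : ℕ) + 1 := congrArg Fin.val hf
        omega
      · have : ((j1 : ℕ) + k) = (j2 : ℕ) + k := congrArg Fin.val hf
        exact Fin.ext (by omega)
  have hbij : Function.Bijective f :=
    (Fintype.bijective_iff_injective_and_card f).2 ⟨hinj, by simp [hkm]⟩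
  let e1 := Fintype.equivFin {v // ¬ P v}
  let e2 := Fintype.equivFin {v // P v}
  let σ : V ≃ Fin n :=
    ((Equiv.sumCompl P).symm.trans (Equiv.sumComm _ _)).trans
      ((Equiv.sumCongr e1 e2).trans (Equiv.ofBijective f hbij))
  refine ⟨σ, fun v hv => ?_⟩
  have : σ v = f (Sum.inl (e1 ⟨v, hv⟩)) := by
    simp [σ, Equiv.sumCompl_symm_apply_of_neg (p := P) hv]
  rw [this]
  exact ⟨(e1 ⟨v, hv⟩ : ℕ), by simp only [f]; omega⟩

theorem pcg_aux_key {V : Type*} [Fintype V] (G : SimpleGraph V) (σ : V ≃ Fin (Fintype.card V))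
    (hσ : ∀ v : V, ¬(∀ u : V, u ≠ v → G.Adj v u) → Even ((σ v : ℕ))) : IsPCO G σ := by
  intro v K a b ha hb hab hmid
  obtain ⟨⟨hav, hva⟩, a', ha', rfl⟩ := ha
  obtain ⟨⟨hbv, hvb⟩, b', hb', rfl⟩ := hb
  have hne : (a' : V) ≠ (b' : V) := fun e => hab.ne (congrArg σ e)
  by_cases hA : ∀ u : V, u ≠ (a' : V) → G.Adj (a' : V) u
  · exact hA _ hne.symm
  by_cases hB : ∀ u : V, u ≠ (b' : V) → G.Adj (b' : V) u
  · exact (hB _ hne).symm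
  · exfalso
    have hea := hσ _ hA
    have heb := hσ _ hB
    obtain ⟨p, hp⟩ := hea
    obtain ⟨q, hq⟩ := heb
    have hab' : (σ a' : ℕ) < σ b' := hab
    have hlt : (σ a' : ℕ) + 1 < Fintype.card V := by
      have := (σ (b' : V)).isLt; omega
    set w : V := σ.symm ⟨(σ a' : ℕ) + 1, hlt⟩ with hw
    have hσw : (σ w : ℕ) = (σ a' : ℕ) + 1 := by simp [hw]
    have hwuniv : ∀ u : V, u ≠ w → G.Adj w u := by
      by_contra hc
      have := hσ w hc
      obtain ⟨r, hr⟩ := this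
      omega
    have hvw : v ≠ w := by
      intro e
      have h2 : (σ v : ℕ) = σ w := by rw [e]
      have : (σ v : ℕ) < σ (a' : V) := hva
      omega
    have hwv : w ≠ v := hvw.symm
    have haw : (a' : V) ≠ w := by
      intro e
      have h2 : (σ (a':V) : ℕ) = σ w := by rw [e]
      omega
    -- w is in NPlus
    have hwN : w ∈ NPlus G σ v := ⟨(hwuniv v hvw).symm, by
      have : (σ v : ℕ) < σ (a' : V) := hva
      show (σ v : ℕ) < σ w
      omega⟩
    -- w is in the component
    have hadj : (G.induce {u : V | u ≠ v}).Adj ⟨w, hwv⟩ a' := by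
      simpa using (hwuniv _ haw)
    have hwK : (⟨w, hwv⟩ : {u : V | u ≠ v}) ∈ K.supp := by
      rw [SimpleGraph.ConnectedComponent.mem_supp_iff]
      rw [SimpleGraph.ConnectedComponent.sound hadj.reachable]
      exact (SimpleGraph.ConnectedComponent.mem_supp_iff _ _).1 ha'
    refine hmid w ⟨hwN, ⟨w, hwv⟩, hwK, rfl⟩ ⟨?_, ?_⟩
    · show (σ (a' : V) : ℕ) < σ w; omega
    · show (σ w : ℕ) < σ (b' : V); omega

/-- A graph on `n` vertices with at least `⌊n/2⌋` universal vertices is a perfect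
cancellation graph. -/
theorem stmt14 {V : Type*} [Fintype V] [DecidableEq V] (G : SimpleGraph V)
    (h : Fintype.card V / 2 ≤ Nat.card {v : V | ∀ u : V, u ≠ v → G.Adj v u}) :
    PerfectCancellationGraph G := by
  obtain ⟨σ, hσ⟩ := pcg_aux_exists_sigma (fun v => ∀ u : V, u ≠ v → G.Adj v u) h
  exact ⟨σ, pcg_aux_key G σ hσ⟩
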